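/- Let f, g: ℝ/ℤ → ℝ/ℤ be covering maps, let [a,b] be an interval on the circle with f(a) = g(a) and f(b) = g(b), and suppose g is a p-winding of f on [a,b] for some integer p ≥ 0. If all fixed points of f and of g in [a,b] are topologically repelling, then the number of fixed points of g in [a,b] exceeds the number of fixed points of f in [a,b] by exactly p. -/

import Mathlib

open scoped Classical

noncomputable section

/-- The representative of `i : ZMod q` in `{1, …, q}`. -/
def rep (q : ℕ) [NeZero q] (i : ZMod q) : ℕ :=
  if i = 0 then q else i.val

/-- The rotation `ρ : i ↦ i + 1 (mod q)` of `ZMod q`. -/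
def rotPerm (q : ℕ) : Equiv.Perm (ZMod q) :=
  Equiv.addRight 1

/-- The descent number `des σ`: the number of `i ∈ ZMod q` with `σ(i) > σ(i+1)`,
values compared via their representatives in `{1, …, q}`. -/
def desNum (q : ℕ) [NeZero q] (σ : Equiv.Perm (ZMod q)) : ℕ :=
  (Finset.univ.filter fun i : ZMod q => rep q (σ (i + 1)) < rep q (σ i)).card

/-- `σ` is a `q`-cycle, i.e. it acts transitively on `ZMod q`. -/
def IsQCycle (q : ℕ) (σ : Equiv.Perm (ZMod q)) : Prop :=
  ∀ i j : ZMod q, ∃ n : ℕ, (σ ^ n) i = j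

/-- The transition matrix of `σ`: the `(i,j)` entry is `1` if `j` lies in the
cyclic interval `[σ(i), σ(i+1))` of `ZMod q` and `0` otherwise. -/
def transMatrix (q : ℕ) [NeZero q] (σ : Equiv.Perm (ZMod q)) :
    Matrix (ZMod q) (ZMod q) ℝ :=
  Matrix.of fun i j => if (j - σ i).val < (σ (i + 1) - σ i).val then (1 : ℝ) else 0

/-- A probability vector: non-negative components summing to `1`. -/
def IsProbVec (q : ℕ) [NeZero q] (v : ZMod q → ℝ) : Prop :=
  (∀ i, 0 ≤ v i) ∧ ∑ i, v i = 1

/-- The symmetry order of `σ`: the order of the stabilizer of `σ` in the rotation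
group `⟨ρ⟩` acting by conjugation. -/
def symOrder (q : ℕ) [NeZero q] (σ : Equiv.Perm (ZMod q)) : ℕ :=
  ((Finset.range q).filter fun j => rotPerm q ^ j * σ * (rotPerm q ^ j)⁻¹ = σ).card

/-- `F : ℝ → ℝ` is a lift of a degree `k` covering map of `ℝ/ℤ`:
a homeomorphism of `ℝ` with `F (t+1) = F t + k`. -/
def IsDegreeLift (k : ℕ) (F : ℝ → ℝ) : Prop :=
  Continuous F ∧ StrictMono F ∧ ∀ t, F (t + 1) = F t + k

/-- The fixed point of the circle map corresponding to `u` (a point with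
`F u - u ∈ ℤ`) is topologically repelling: `t ↦ F t - t` is strictly increasing
in a neighborhood of `u`. -/
def TopRepelling (F : ℝ → ℝ) (u : ℝ) : Prop :=
  ∃ ε > 0, StrictMonoOn (fun t => F t - t) (Set.Ioo (u - ε) (u + ε))

/-- `x : ZMod q → ℝ` is a period `q` orbit realizing `σ` for the circle map with
lift `F`: the points `x i` lie in `(0,1)` and are increasing with respect to the
representatives `{1, …, q}` (so that `0, x₁, …, x_q` are in positive cyclic
order), and on the circle `f(x i) = x (σ i)` for all `i`. -/
def IsRealization (q : ℕ) [NeZero q] (σ : Equiv.Perm (ZMod q))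
    (F : ℝ → ℝ) (x : ZMod q → ℝ) : Prop :=
  (∀ i, x i ∈ Set.Ioo (0 : ℝ) 1) ∧
  (∀ i j : ZMod q, rep q i < rep q j → x i < x j) ∧
  (∀ i, ∃ m : ℤ, F (x i) = x (σ i) + m)

/-- A realization of `σ` under the multiplication map `m_k : x ↦ kx (mod ℤ)`. -/
def MkRealization (q k : ℕ) [NeZero q] (σ : Equiv.Perm (ZMod q)) (x : ZMod q → ℝ) : Prop :=
  IsRealization q σ (fun t => (k : ℝ) * t) x

/-- The upper endpoint (as a real number) of the partition interval
`I i = [x i, x (i+1)]`; for `i = 0 ≡ q` the interval wraps around `0 ∈ ℝ/ℤ`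
and the endpoint is `x 1 + 1`. -/
def upperPt (q : ℕ) [NeZero q] (x : ZMod q → ℝ) (i : ZMod q) : ℝ :=
  if i = 0 then x 1 + 1 else x (i + 1)

/-- The `i`-th component of the fixed point distribution: the number of fixed
points of `m_k` (the points `j/(k-1) (mod ℤ)`) in the interior of the partition
interval `I i`. -/
def fixDist (q k : ℕ) [NeZero q] (x : ZMod q → ℝ) (i : ZMod q) : ℕ :=
  ((Finset.Icc 1 (2 * (k - 1))).filter fun j : ℕ =>
    x i < (j : ℝ) / ((k : ℝ) - 1) ∧ (j : ℝ) / ((k : ℝ) - 1) < upperPt q x i).card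

/-- The number of fixed points of `m_k` in the interval `(0, x 1)`. -/
def countFixBelow (q k : ℕ) [NeZero q] (x : ZMod q → ℝ) : ℕ :=
  ((Finset.range (k - 1)).filter fun j : ℕ =>
    0 < j ∧ (j : ℝ) / ((k : ℝ) - 1) < x 1).card

/-- The `m`-th component of the (cumulative) deployment vector: the number of
orbit points in `(0, m/(k-1))`. -/
def depCount (q k : ℕ) [NeZero q] (x : ZMod q → ℝ) (m : ℕ) : ℕ :=
  (Finset.univ.filter fun j : ZMod q => x j < (m : ℝ) / ((k : ℝ) - 1)).card

/-- The rank of a marked index `i` among the marked indices `i₁ < ⋯ < i_{d-1}`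
(ordered by their representatives in `{1, …, q}`). -/
def markRank (q : ℕ) [NeZero q] (σ : Equiv.Perm (ZMod q)) (i : ZMod q) : ℕ :=
  (Finset.univ.filter fun i' : ZMod q =>
    transMatrix q σ i' i' = 1 ∧ rep q i' ≤ rep q i).card

/-- No "downward reach": cannot have `φ c > m` and `φ d = m` with `c < d`. -/
lemma no_descend {F : ℝ → ℝ} (hc : Continuous F) {a b : ℝ}
    (hrep : ∀ u ∈ Set.Icc a b, (∃ m : ℤ, F u - u = m) → TopRepelling F u)
    {c d : ℝ} (hc1 : c ∈ Set.Icc a b) (hd1 : d ∈ Set.Icc a b) (hcd : c < d)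
    {m : ℤ} (hφc : (m : ℝ) < F c - c) (hφd : F d - d = m) : False := by
  set φ : ℝ → ℝ := fun t => F t - t with hφdef
  have hφ : Continuous φ := hc.sub continuous_id
  set U : Set ℝ := {t | t ∈ Set.Icc c d ∧ φ t = m} with hU
  have hUc : IsClosed U := by
    have : U = Set.Icc c d ∩ φ ⁻¹' {(m : ℝ)} := by
      ext t; simp [hU, Set.mem_inter_iff]
    rw [this]
    exact isClosed_Icc.inter (isClosed_singleton.preimage hφ)
  have hUne : U.Nonempty := ⟨d, ⟨le_of_lt hcd, le_refl d⟩, hφd⟩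
  have hUbdd : BddBelow U := ⟨c, fun t ht => ht.1.1⟩
  set u₀ := sInf U with hu₀
  have hu₀U : u₀ ∈ U := hUc.csInf_mem hUne hUbdd
  have hcu₀ : c < u₀ := by
    rcases lt_or_eq_of_le hu₀U.1.1 with h | h
    · exact h
    · exfalso; rw [← h] at hu₀U
      exact absurd hu₀U.2 (ne_of_gt hφc)
  have key : ∀ t ∈ Set.Ico c u₀, (m : ℝ) < φ t := by
    intro t ht
    by_contra h
    push_neg at h
    have htU : t ∉ U := fun htU => absurd (csInf_le hUbdd htU) (not_le.2 ht.2)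
    have htIcc : t ∈ Set.Icc c d := ⟨ht.1, le_trans ht.2.le hu₀U.1.2⟩
    have hne : φ t ≠ m := fun he => htU ⟨htIcc, he⟩
    have hlt : φ t < m := lt_of_le_of_ne h hne
    have := intermediate_value_Icc' ht.1 hφ.continuousOn
      (Set.mem_Icc.2 ⟨le_of_lt hlt, le_of_lt hφc⟩)
    obtain ⟨s, hs, hsm⟩ := this
    have hsU : s ∈ U := ⟨⟨hs.1, le_trans hs.2 htIcc.2⟩, hsm⟩
    exact absurd (csInf_le hUbdd hsU) (not_le.2 (lt_of_le_of_lt hs.2 ht.2))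
  obtain ⟨ε, hε, hmono⟩ := hrep u₀ ⟨le_trans hc1.1 hu₀U.1.1, le_trans hu₀U.1.2 hd1.2⟩
    ⟨m, hu₀U.2⟩
  set t := max c (u₀ - ε / 2) with ht
  have htlt : t < u₀ := max_lt hcu₀ (by linarith)
  have htIoo : t ∈ Set.Ioo (u₀ - ε) (u₀ + ε) :=
    ⟨lt_of_lt_of_le (by linarith) (le_max_right _ _), by linarith⟩
  have hu₀Ioo : u₀ ∈ Set.Ioo (u₀ - ε) (u₀ + ε) := ⟨by linarith, by linarith⟩
  have h1 : φ t < φ u₀ := hmono htIoo hu₀Ioo htlt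
  have h2 : (m : ℝ) < φ t := key t ⟨le_max_left _ _, htlt⟩
  rw [hu₀U.2] at h1
  linarith

/-- No "upward reach": cannot have `φ c = m` and `φ d < m` with `c < d`. -/
lemma no_ascend {F : ℝ → ℝ} (hc : Continuous F) {a b : ℝ}
    (hrep : ∀ u ∈ Set.Icc a b, (∃ m : ℤ, F u - u = m) → TopRepelling F u)
    {c d : ℝ} (hc1 : c ∈ Set.Icc a b) (hd1 : d ∈ Set.Icc a b) (hcd : c < d)
    {m : ℤ} (hφc : F c - c = m) (hφd : F d - d < m) : False := by
  set φ : ℝ → ℝ := fun t => F t - t with hφdef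
  have hφ : Continuous φ := hc.sub continuous_id
  set U : Set ℝ := {t | t ∈ Set.Icc c d ∧ φ t = m} with hU
  have hUc : IsClosed U := by
    have : U = Set.Icc c d ∩ φ ⁻¹' {(m : ℝ)} := by
      ext t; simp [hU, Set.mem_inter_iff]
    rw [this]
    exact isClosed_Icc.inter (isClosed_singleton.preimage hφ)
  have hUne : U.Nonempty := ⟨c, ⟨le_refl c, le_of_lt hcd⟩, hφc⟩
  have hUbdd : BddAbove U := ⟨d, fun t ht => ht.1.2⟩
  set u₁ := sSup U with hu₁
  have hu₁U : u₁ ∈ U := hUc.csSup_mem hUne hUbdd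
  have hu₁d : u₁ < d := by
    rcases lt_or_eq_of_le hu₁U.1.2 with h | h
    · exact h
    · exfalso; rw [h] at hu₁U
      exact absurd hu₁U.2 (ne_of_lt hφd)
  have key : ∀ t ∈ Set.Ioc u₁ d, φ t < m := by
    intro t ht
    by_contra h
    push_neg at h
    have htU : t ∉ U := fun htU => absurd (le_csSup hUbdd htU) (not_le.2 ht.1)
    have htIcc : t ∈ Set.Icc c d := ⟨le_trans hu₁U.1.1 ht.1.le, ht.2⟩
    have hne : φ t ≠ m := fun he => htU ⟨htIcc, he⟩
    have hlt : (m : ℝ) < φ t := lt_of_le_of_ne h (Ne.symm hne)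
    have := intermediate_value_Icc' ht.2 hφ.continuousOn
      (Set.mem_Icc.2 ⟨le_of_lt hφd, le_of_lt hlt⟩)
    obtain ⟨s, hs, hsm⟩ := this
    have hsU : s ∈ U := ⟨⟨le_trans htIcc.1 hs.1, hs.2⟩, hsm⟩
    exact absurd (le_csSup hUbdd hsU) (not_le.2 (lt_of_lt_of_le ht.1 hs.1))
  obtain ⟨ε, hε, hmono⟩ := hrep u₁ ⟨le_trans hc1.1 hu₁U.1.1, le_trans hu₁U.1.2 hd1.2⟩
    ⟨m, hu₁U.2⟩
  set t := min d (u₁ + ε / 2) with ht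
  have htgt : u₁ < t := lt_min hu₁d (by linarith)
  have htIoo : t ∈ Set.Ioo (u₁ - ε) (u₁ + ε) :=
    ⟨by linarith, lt_of_le_of_lt (min_le_right _ _) (by linarith)⟩
  have hu₁Ioo : u₁ ∈ Set.Ioo (u₁ - ε) (u₁ + ε) := ⟨by linarith, by linarith⟩
  have h1 : φ u₁ < φ t := hmono hu₁Ioo htIoo htgt
  have h2 : φ t < m := key t ⟨htgt, min_le_left _ _⟩
  rw [hu₁U.2] at h1
  linarith

lemma fix_count {F : ℝ → ℝ} (hc : Continuous F) {a b : ℝ} (hab : a ≤ b)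
    (hrep : ∀ u ∈ Set.Icc a b, (∃ m : ℤ, F u - u = m) → TopRepelling F u) :
    {u ∈ Set.Icc a b | ∃ m : ℤ, F u - u = m}.Finite ∧
    {u ∈ Set.Icc a b | ∃ m : ℤ, F u - u = m}.ncard
      = (⌊F b - b⌋ + 1 - ⌈F a - a⌉).toNat ∧
    0 ≤ ⌊F b - b⌋ + 1 - ⌈F a - a⌉ := by
  have hφ : Continuous (fun t => F t - t) := hc.sub continuous_id
  set S : Set ℝ := {u ∈ Set.Icc a b | ∃ m : ℤ, F u - u = m} with hS
  -- lower bound on values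
  have lower : ∀ u ∈ Set.Icc a b, ∀ m : ℤ, F u - u = m → F a - a ≤ m := by
    intro u hu m hm
    by_contra h
    push_neg at h
    rcases eq_or_lt_of_le hu.1 with he | hlt
    · rw [← he] at hm; rw [hm] at h; exact lt_irrefl _ h
    · exact no_descend hc hrep ⟨le_refl a, hab⟩ hu hlt h hm
  have upper : ∀ u ∈ Set.Icc a b, ∀ m : ℤ, F u - u = m → (m : ℝ) ≤ F b - b := by
    intro u hu m hm
    by_contra h
    push_neg at h
    rcases eq_or_lt_of_le hu.2 with he | hlt
    · rw [he] at hm; rw [hm] at h; exact lt_irrefl _ h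
    · exact no_ascend hc hrep hu ⟨hab, le_refl b⟩ hlt hm h
  -- injectivity of u ↦ value
  have inj : ∀ u ∈ S, ∀ v ∈ S, F u - u = F v - v → u = v := by
    have main : ∀ u ∈ S, ∀ v ∈ S, u < v → F u - u = F v - v → False := by
      intro u hu v hv huv heq
      obtain ⟨m, hm⟩ := hu.2
      obtain ⟨ε, hε, hmono⟩ := hrep u hu.1 ⟨m, hm⟩
      set t := min v (u + ε / 2) with ht
      have htgt : u < t := lt_min huv (by linarith)
      have htIoo : t ∈ Set.Ioo (u - ε) (u + ε) :=
        ⟨by linarith, lt_of_le_of_lt (min_le_right _ _) (by linarith)⟩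
      have huIoo : u ∈ Set.Ioo (u - ε) (u + ε) := ⟨by linarith, by linarith⟩
      have h1 : F u - u < F t - t := hmono huIoo htIoo htgt
      rw [hm] at h1
      rcases eq_or_lt_of_le (min_le_left v (u + ε / 2)) with he | hlt
      · have h1' : (m : ℝ) < F v - v := by rw [← he]; exact h1
        rw [← heq, hm] at h1'; exact lt_irrefl _ h1'
      · have hmv : F v - v = m := by rw [← heq, hm]
        exact no_descend hc hrep ⟨le_trans hu.1.1 htgt.le,
          le_trans hlt.le hv.1.2⟩ hv.1 hlt h1 hmv
    intro u hu v hv heq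
    rcases lt_trichotomy u v with h | h | h
    · exact absurd (main u hu v hv h heq) (fun x => x)
    · exact h
    · exact absurd (main v hv u hu h heq.symm) (fun x => x)
  -- the value map
  set f : ℝ → ℤ := fun u => ⌊F u - u⌋ with hf
  have hval : ∀ u ∈ S, (f u : ℝ) = F u - u := by
    intro u hu
    obtain ⟨m, hm⟩ := hu.2
    simp only [hf, hm, Int.floor_intCast]
  have hinj : Set.InjOn f S := by
    intro u hu v hv he
    apply inj u hu v hv
    rw [← hval u hu, ← hval v hv, he]
  have himg : f '' S = Set.Icc ⌈F a - a⌉ ⌊F b - b⌋ := by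
    ext m
    constructor
    · rintro ⟨u, hu, rfl⟩
      obtain ⟨m', hm'⟩ := hu.2
      have hfum : f u = m' := by simp [hf, hm', Int.floor_intCast]
      rw [hfum]
      exact ⟨Int.ceil_le.2 (lower u hu.1 m' hm'), Int.le_floor.2 (upper u hu.1 m' hm')⟩
    · rintro ⟨h1, h2⟩
      have h1' : F a - a ≤ (m : ℝ) := Int.ceil_le.1 h1
      have h2' : (m : ℝ) ≤ F b - b := Int.le_floor.1 h2
      obtain ⟨u, hu, hum⟩ := intermediate_value_Icc hab hφ.continuousOn
        (Set.mem_Icc.2 ⟨h1', h2'⟩)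
      have huS : u ∈ S := ⟨hu, m, hum⟩
      exact ⟨u, huS, by simp [hf, hum, Int.floor_intCast]⟩
  have hfin : S.Finite := by
    apply Set.Finite.of_finite_image _ hinj
    rw [himg]; exact Set.finite_Icc _ _
  refine ⟨hfin, ?_, ?_⟩
  · have : S.ncard = (f '' S).ncard := (Set.ncard_image_of_injOn hinj).symm
    rw [this, himg, ← Finset.coe_Icc, Set.ncard_coe_finset, Int.card_Icc]
  · by_contra h
    push_neg at h
    set m : ℤ := ⌊F b - b⌋ + 1 with hm
    have hmy : F b - b < m := by push_cast [hm]; exact Int.lt_floor_add_one _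
    have hmx : (m : ℝ) < F a - a := by
      have h1 : m ≤ ⌈F a - a⌉ - 1 := by omega
      have h2 : (⌈F a - a⌉ : ℝ) - 1 < F a - a := by
        have := Int.ceil_lt_add_one (F a - a); linarith
      calc (m : ℝ) ≤ (⌈F a - a⌉ : ℝ) - 1 := by exact_mod_cast h1
        _ < F a - a := h2
    obtain ⟨u, hu, hum⟩ := intermediate_value_Icc' hab hφ.continuousOn
      (Set.mem_Icc.2 ⟨hmy.le, hmx.le⟩)
    exact absurd (lower u hu m hum) (not_le.2 hmx)

/-- If `g` is a `p`-winding of `f` on `[a,b]` (expressed via lifts `F`, `G` with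
`G a = F a` and `G b = F b + p`, where `a < b < a + 1` are representatives of the
endpoints) and all fixed points of `f` and `g` in `[a,b]` are topologically
repelling, then `g` has exactly `p` more fixed points than `f` in `[a,b]`. -/
theorem winding_fixed_point_count (kf kg : ℕ) (hkf : 1 ≤ kf) (hkg : 1 ≤ kg)
    (F G : ℝ → ℝ) (hF : IsDegreeLift kf F) (hG : IsDegreeLift kg G)
    (a b : ℝ) (hab : a < b) (hb : b < a + 1)
    (p : ℕ) (hGa : G a = F a) (hGb : G b = F b + p)
    (hrepF : ∀ u ∈ Set.Icc a b, (∃ m : ℤ, F u - u = m) → TopRepelling F u)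
    (hrepG : ∀ u ∈ Set.Icc a b, (∃ m : ℤ, G u - u = m) → TopRepelling G u) :
    {u ∈ Set.Icc a b | ∃ m : ℤ, F u - u = m}.Finite ∧
    {u ∈ Set.Icc a b | ∃ m : ℤ, G u - u = m}.Finite ∧
    {u ∈ Set.Icc a b | ∃ m : ℤ, G u - u = m}.ncard
      = {u ∈ Set.Icc a b | ∃ m : ℤ, F u - u = m}.ncard + p := by
  obtain ⟨hFfin, hFcard, hFpos⟩ := fix_count hF.1 hab.le hrepF
  obtain ⟨hGfin, hGcard, -⟩ := fix_count hG.1 hab.le hrepG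
  refine ⟨hFfin, hGfin, ?_⟩
  rw [hFcard, hGcard]
  have h1 : ⌈G a - a⌉ = ⌈F a - a⌉ := by rw [hGa]
  have h2 : ⌊G b - b⌋ = ⌊F b - b⌋ + (p : ℤ) := by
    have he : G b - b = F b - b + (p : ℕ) := by rw [hGb]; ring
    rw [he, Int.floor_add_natCast]
  rw [h1, h2]
  omega
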